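/- Let n ≥ 2 be even, ε a primitive n-th root of unity in ℂ, and D_{2n} = ⟨a,b | aⁿ = b² = 1, bab = a⁻¹⟩. Define α: D_{2n} × D_{2n} → S¹ by α(aʲ, aᵏbˡ) = 1 and α(aʲb, aᵏbˡ) = εᵏ for 0 ≤ j,k ≤ n−1, l ∈ {0,1}. Then α is a normalized 2-cocycle on D_{2n} with values in S¹. -/

import Mathlib

/-- The 2-cocycle on the dihedral group `D_{2n}` determined by
`α(aʲ, aᵏbˡ) = 1` and `α(aʲb, aᵏbˡ) = εᵏ` (in Mathlib's `DihedralGroup n`,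
`a = r 1`, `b = sr 0`, so `aᵏ = r k` and `aᵏb = sr (-k)`). -/
def dihedralCocycle (n : ℕ) [NeZero n] (ε : ℂ) :
    DihedralGroup n → DihedralGroup n → ℂ
  | DihedralGroup.r _, _ => 1
  | DihedralGroup.sr _, DihedralGroup.r k => ε ^ k.val
  | DihedralGroup.sr _, DihedralGroup.sr m => ε ^ (-m : ZMod n).val

lemma pow_val_add_aux (n : ℕ) [NeZero n] (ε : ℂ) (hε : ε ^ n = 1)
    (a b : ZMod n) : ε ^ (a + b).val = ε ^ a.val * ε ^ b.val := by
  rw [ZMod.val_add, ← pow_add]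
  conv_rhs => rw [← Nat.mod_add_div (a.val + b.val) n]
  rw [pow_add, pow_mul, hε, one_pow, mul_one]

/-- For `n ≥ 2` even and `ε` a primitive `n`-th root of unity, the function
`α(aʲ, aᵏbˡ) = 1`, `α(aʲb, aᵏbˡ) = εᵏ` is a normalized 2-cocycle on `D_{2n}`
with values in `S¹`. -/
theorem stmt14 (n : ℕ) [NeZero n] (hn2 : 2 ≤ n) (hn : Even n)
    (ε : ℂ) (hε : IsPrimitiveRoot ε n) :
    (∀ g h : DihedralGroup n, ‖dihedralCocycle n ε g h‖ = 1) ∧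
    (∀ g h k : DihedralGroup n,
      dihedralCocycle n ε (g * h) k * dihedralCocycle n ε g h
      = dihedralCocycle n ε g (h * k) * dihedralCocycle n ε h k) ∧
    (∀ g : DihedralGroup n,
      dihedralCocycle n ε g 1 = 1 ∧ dihedralCocycle n ε 1 g = 1) := by
  have hεn : ε ^ n = 1 := hε.pow_eq_one
  have hnorm : ‖ε‖ = 1 := Complex.norm_eq_one_of_pow_eq_one hεn (NeZero.ne n)
  have key := pow_val_add_aux n ε hεn
  refine ⟨?_, ?_, ?_⟩
  · rintro (j | j) (k | k) <;>
      simp [dihedralCocycle, norm_pow, hnorm]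
  · rintro (i | i) (j | j) (k | k) <;>
      simp only [dihedralCocycle, DihedralGroup.r_mul_r, DihedralGroup.r_mul_sr,
        DihedralGroup.sr_mul_r, DihedralGroup.sr_mul_sr, one_mul, mul_one]
    · rw [key, mul_comm]
    · rw [show -((k : ZMod n) - j) = j + -k by ring, key, mul_comm]
    · rw [show -((j : ZMod n) + k) = -j + -k by ring, key, mul_assoc, ← key]
      simp
    · rw [show -(j : ZMod n) = (k - j) + -k by ring, key]
  · rintro (j | j) <;>
      simp [dihedralCocycle, DihedralGroup.one_def, -DihedralGroup.r_zero]
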